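/- Let (Ω,σ) be a topological dynamical system, f continuous with ergodic minimizing value f̄, and assume u(ω) := - inf_{n≥1} Σ_{k=0}^{n-1}(f - f̄)(σ^k(ω)) < ∞ for all ω. Define the Mather set 𝓜(f) as the union of supports of minimizing measures, and let M := { ω ∈ 𝓜(f) : for all k ≥ 0, (f - f̄ - u⁺∘σ + u⁺)(σ^k(ω)) = 0 }. Then μ(M) = 1 for every minimizing measure μ, and M is residual (contains a dense Gδ) in 𝓜(f). -/

import Mathlib

open MeasureTheory Filter Topology

noncomputable section

variable {Ω : Type*}

/-- `μ` is a `σ`-invariant Borel probability measure. -/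
def IsInvProb [MeasurableSpace Ω] (σ : Ω → Ω) (μ : Measure Ω) : Prop :=
  IsProbabilityMeasure μ ∧ Measure.map σ μ = μ

/-- Birkhoff sum `∑_{k=0}^{n-1} g(σ^k ω)`. -/
def birk (σ : Ω → Ω) (g : Ω → ℝ) (n : ℕ) (ω : Ω) : ℝ :=
  ∑ k ∈ Finset.range n, g (σ^[k] ω)

/-- The transfer function `u(ω) = - inf_{n ≥ 1} ∑_{k=0}^{n-1} (f - f̄)(σ^k ω)`. -/
def uFn (σ : Ω → Ω) (f : Ω → ℝ) (fbar : ℝ) (ω : Ω) : ℝ :=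
  -(⨅ n : ℕ, birk σ (fun x => f x - fbar) (n + 1) ω)

/-- The support of a measure: points all of whose open neighborhoods have positive measure. -/
def msupport [TopologicalSpace Ω] [MeasurableSpace Ω] (μ : Measure Ω) : Set Ω :=
  {ω | ∀ U : Set Ω, IsOpen U → ω ∈ U → 0 < μ U}

/-- `μ` is a minimizing measure for `f` with ergodic minimizing value `fbar`. -/
def IsMinimizing [MeasurableSpace Ω] (σ : Ω → Ω) (f : Ω → ℝ) (fbar : ℝ)
    (μ : Measure Ω) : Prop :=
  IsInvProb σ μ ∧ ∫ x, f x ∂μ = fbar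

/-- The Mather set: union of supports of minimizing measures. -/
def MatherSet [TopologicalSpace Ω] [MeasurableSpace Ω] (σ : Ω → Ω) (f : Ω → ℝ)
    (fbar : ℝ) : Set Ω :=
  {ω | ∃ μ : Measure Ω, IsMinimizing σ f fbar μ ∧ ω ∈ msupport μ}

/-- `fbar` is the minimum of `∫ f dμ` over invariant probability measures. -/
def IsErgMinValue [MeasurableSpace Ω] (σ : Ω → Ω) (f : Ω → ℝ) (fbar : ℝ) : Prop :=
  IsLeast {x : ℝ | ∃ μ : Measure Ω, IsInvProb σ μ ∧ ∫ w, f w ∂μ = x} fbar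

/-- The set `M` of orbits in the Mather set on which the cohomological equation holds. -/
def SolSet [TopologicalSpace Ω] [MeasurableSpace Ω] (σ : Ω → Ω) (f : Ω → ℝ) (fbar : ℝ) :
    Set Ω :=
  {ω ∈ MatherSet σ f fbar | ∀ k : ℕ,
    f (σ^[k] ω) - fbar - max (uFn σ f fbar (σ^[k + 1] ω)) 0
      + max (uFn σ f fbar (σ^[k] ω)) 0 = 0}


section Helpers

open Set

private lemma helper_isGδ_preimage {X Y : Type*} [TopologicalSpace X] [TopologicalSpace Y]
    {f : X → Y} (hf : Continuous f) {s : Set Y} (hs : IsGδ s) : IsGδ (f ⁻¹' s) := by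
  obtain ⟨T, hTo, hTc, rfl⟩ := hs
  rw [Set.sInter_eq_biInter, Set.preimage_iInter₂]
  exact IsGδ.biInter hTc fun t ht => ((hTo t ht).preimage hf).isGδ

private lemma helper_msupport_compl {Ω : Type*} [TopologicalSpace Ω] [MeasurableSpace Ω]
    (μ : Measure Ω) : (msupport μ)ᶜ = ⋃₀ {U : Set Ω | IsOpen U ∧ μ U = 0} := by
  ext x
  simp only [Set.mem_compl_iff, msupport, Set.mem_setOf_eq, Set.mem_sUnion]
  constructor
  · intro hx
    push_neg at hx
    obtain ⟨U, hUo, hxU, hU0⟩ := hx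
    exact ⟨U, ⟨hUo, nonpos_iff_eq_zero.1 hU0⟩, hxU⟩
  · rintro ⟨U, ⟨hUo, hU0⟩, hxU⟩ hx
    exact absurd hU0 (hx U hUo hxU).ne'

private lemma helper_msupport_closed {Ω : Type*} [TopologicalSpace Ω] [MeasurableSpace Ω]
    (μ : Measure Ω) : IsClosed (msupport μ) := by
  rw [← isOpen_compl_iff, helper_msupport_compl]
  exact isOpen_sUnion fun U hU => hU.1

private lemma helper_msupport_null {Ω : Type*} [TopologicalSpace Ω] [SecondCountableTopology Ω]
    [MeasurableSpace Ω] (μ : Measure Ω) : μ (msupport μ)ᶜ = 0 := by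
  rw [helper_msupport_compl]
  obtain ⟨T, hTc, hTsub, hTeq⟩ :=
    TopologicalSpace.isOpen_sUnion_countable {U : Set Ω | IsOpen U ∧ μ U = 0}
      (fun U hU => hU.1)
  rw [← hTeq, Set.sUnion_eq_biUnion]
  exact measure_biUnion_null_iff hTc |>.2 fun s hs => (hTsub hs).2

private lemma helper_bound {Ω : Type*} [TopologicalSpace Ω] [CompactSpace Ω] {ψ : Ω → ℝ}
    (h : Continuous ψ) : ∃ C : ℝ, 0 ≤ C ∧ ∀ x, |ψ x| ≤ C := by
  obtain ⟨C, hC⟩ := (isCompact_univ.image h.norm).bddAbove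
  refine ⟨max C 0, le_max_right _ _, fun x => ?_⟩
  have := hC (Set.mem_image_of_mem _ (Set.mem_univ x))
  rw [Real.norm_eq_abs] at this
  exact this.trans (le_max_left _ _)

private lemma helper_int {Ω : Type*} [MeasurableSpace Ω] {μ : Measure Ω} [IsFiniteMeasure μ]
    {ψ : Ω → ℝ} (hm : Measurable ψ) {C : ℝ} (hb : ∀ x, |ψ x| ≤ C) : Integrable ψ μ :=
  Integrable.mono' (integrable_const C) hm.aestronglyMeasurable
    (Filter.Eventually.of_forall fun x => by simpa [Real.norm_eq_abs] using hb x)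

end Helpers

/-- `μ(M) = 1` for every minimizing measure, and `M` is residual in the
Mather set. -/
theorem stmt3 [MetricSpace Ω] [CompactSpace Ω] [MeasurableSpace Ω] [BorelSpace Ω]
    (σ : Ω → Ω) (hσ : Continuous σ) (f : Ω → ℝ) (hf : Continuous f) (fbar : ℝ)
    (hfbar : IsErgMinValue σ f fbar)
    (hfin : ∀ ω : Ω, BddBelow (Set.range fun n : ℕ => birk σ (fun x => f x - fbar) (n + 1) ω)) :
    (∀ μ : Measure Ω, IsMinimizing σ f fbar μ → μ (SolSet σ f fbar) = 1) ∧
    (Subtype.val ⁻¹' SolSet σ f fbar : Set (MatherSet σ f fbar)) ∈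
      residual (MatherSet σ f fbar) := by
  classical
  -- abbreviations
  set g : Ω → ℝ := fun x => f x - fbar with hg_def
  have hgc : Continuous g := hf.sub continuous_const
  set v : Ω → ℝ := fun ω => ⨅ n : ℕ, birk σ g (n + 1) ω with hv_def
  set up : Ω → ℝ := fun ω => max (uFn σ f fbar ω) 0 with hup_def
  set h : Ω → ℝ := fun ω => g ω - up (σ ω) + up ω with hh_def
  have hufn : ∀ ω, uFn σ f fbar ω = -(v ω) := fun ω => rfl
  obtain ⟨Cf, hCf0, hCf⟩ := helper_bound hf
  obtain ⟨C, hC0, hC⟩ := helper_bound hgc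
  have hbirk_cont : ∀ n, Continuous (fun ω => birk σ g n ω) := by
    intro n
    simp only [birk]
    exact continuous_finset_sum _ fun k _ => hgc.comp (hσ.iterate k)
  have hbdd : ∀ ω, BddBelow (Set.range fun n : ℕ => birk σ g (n + 1) ω) := hfin
  have hv_le : ∀ ω (n : ℕ), v ω ≤ birk σ g (n + 1) ω := fun ω n => ciInf_le (hbdd ω) n
  have hbirk1 : ∀ ω, birk σ g 1 ω = g ω := by intro ω; simp [birk]
  have hbirk_succ : ∀ (n : ℕ) ω, birk σ g (n + 2) ω = g ω + birk σ g (n + 1) (σ ω) := by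
    intro n ω
    rw [birk, Finset.sum_range_succ']
    simp only [Function.iterate_succ_apply, Function.iterate_zero_apply, birk]
    exact add_comm _ _
  have hv1 : ∀ ω, v ω ≤ g ω := fun ω => (hv_le ω 0).trans_eq (hbirk1 ω)
  have hv2 : ∀ ω, v ω ≤ g ω + v (σ ω) := by
    intro ω
    rw [← sub_le_iff_le_add']
    refine le_ciInf fun n => ?_
    rw [sub_le_iff_le_add']
    exact (hv_le ω (n + 1)).trans_eq (hbirk_succ n ω)
  have hup_nonneg : ∀ ω, 0 ≤ up ω := fun ω => le_max_right _ _
  have hup_ge : ∀ ω, -(v ω) ≤ up ω := fun ω => (hufn ω).symm.trans_le (le_max_left _ _)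
  have hup_eq : ∀ ω, up ω = -(min (v ω) 0) := by
    intro ω
    rw [hup_def]
    simp only [hufn ω]
    rw [← neg_zero, max_neg_neg, neg_zero]
  have h_nonneg : ∀ ω, 0 ≤ h ω := by
    intro ω
    have h1 := hv1 ω
    have h2 := hv2 ω
    have e1 : up (σ ω) = -(min (v (σ ω)) 0) := hup_eq (σ ω)
    have e2 : -(v ω) ≤ up ω := hup_ge ω
    show 0 ≤ g ω - up (σ ω) + up ω
    rcases le_total (v (σ ω)) 0 with hc | hc
    · rw [e1, min_eq_left hc]; linarith
    · rw [e1, min_eq_right hc]; linarith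
  -- semicontinuity and measurability
  have husc : UpperSemicontinuous v := by
    intro x y hy
    obtain ⟨n, hn⟩ := exists_lt_of_ciInf_lt hy
    filter_upwards [((hbirk_cont (n + 1)).tendsto x).eventually_lt_const hn] with z hz
    exact lt_of_le_of_lt (hv_le z n) hz
  have hvm : Measurable v := husc.measurable
  have hum : Measurable (uFn σ f fbar) := by
    have : uFn σ f fbar = fun ω => -(v ω) := funext hufn
    rw [this]; exact hvm.neg
  have hupm : Measurable up := hum.max measurable_const
  have hhm : Measurable h :=
    (hgc.measurable.sub (hupm.comp hσ.measurable)).add hupm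
  have hlsc_u : LowerSemicontinuous (uFn σ f fbar) := by
    intro x y hy
    rw [hufn x] at hy
    have hvx : v x < -y := by linarith
    filter_upwards [husc x (-y) hvx] with z hz
    rw [hufn z]; linarith
  have hlsc_up : LowerSemicontinuous up := by
    intro x y hy
    rcases lt_or_ge y 0 with h0 | h0
    · exact Filter.Eventually.of_forall fun z => lt_of_lt_of_le h0 (hup_nonneg z)
    · have hyu : y < uFn σ f fbar x := by
        rcases lt_max_iff.1 hy with hc | hc
        · exact hc
        · exact absurd hc (not_lt.2 h0)
      filter_upwards [hlsc_u x y hyu] with z hz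
      exact lt_of_lt_of_le hz (le_max_left _ _)
  have hp_lsc : LowerSemicontinuous (fun ω => up (σ ω) + -(g ω)) :=
    (hlsc_up.comp hσ).add (hgc.neg.lowerSemicontinuous)
  -- the zero set of h is Gδ
  have hGzero : IsGδ {ω | h ω = 0} := by
    have hset : {ω | h ω = 0} =
        ⋂ r : ℚ, ({ω | (r : ℝ) < up ω}ᶜ ∪ {ω | (r : ℝ) < up (σ ω) + -(g ω)}) := by
      ext ω
      simp only [Set.mem_iInter, Set.mem_union, Set.mem_compl_iff, Set.mem_setOf_eq]
      constructor
      · intro he r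
        have he' : g ω - up (σ ω) + up ω = 0 := he
        by_cases hr : (r : ℝ) < up ω
        · exact Or.inr (by linarith)
        · exact Or.inl hr
      · intro hall
        have hle : up ω ≤ up (σ ω) + -(g ω) := by
          by_contra hlt
          push_neg at hlt
          obtain ⟨r, hr1, hr2⟩ := exists_rat_btwn hlt
          rcases hall r with hna | hp
          · exact hna hr2
          · exact absurd hp (not_lt.2 hr1.le)
        have h2 : 0 ≤ g ω - up (σ ω) + up ω := h_nonneg ω
        show g ω - up (σ ω) + up ω = 0
        linarith
    rw [hset]
    refine IsGδ.iInter fun r => IsGδ.union ?_ ?_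
    · exact ((hlsc_up.isOpen_preimage (r : ℝ)).isClosed_compl).isGδ
    · exact (hp_lsc.isOpen_preimage (r : ℝ)).isGδ
  -- the orbit set B
  set B : Set Ω := ⋂ k : ℕ, (σ^[k]) ⁻¹' {ω | h ω = 0} with hB_def
  have hB_mem : ∀ ω, ω ∈ B ↔ ∀ k : ℕ,
      f (σ^[k] ω) - fbar - max (uFn σ f fbar (σ^[k + 1] ω)) 0
        + max (uFn σ f fbar (σ^[k] ω)) 0 = 0 := by
    intro ω
    rw [hB_def]
    simp only [Set.mem_iInter, Set.mem_preimage, Set.mem_setOf_eq]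
    refine forall_congr' fun k => ?_
    rw [Function.iterate_succ_apply']
  have hSol : SolSet σ f fbar = MatherSet σ f fbar ∩ B := by
    ext ω
    simp only [SolSet, Set.mem_setOf_eq, Set.mem_inter_iff, hB_mem ω]
  have hBmeas : MeasurableSet B := by
    rw [hB_def]
    exact MeasurableSet.iInter fun k =>
      (hσ.iterate k).measurable (hhm (measurableSet_singleton 0))
  have hBGδ : IsGδ B := by
    rw [hB_def]
    exact IsGδ.iInter fun k => helper_isGδ_preimage (hσ.iterate k) hGzero
  -- the key measure-theoretic fact
  have hkey : ∀ μ : Measure Ω, IsMinimizing σ f fbar μ →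
      IsProbabilityMeasure μ ∧ μ (msupport μ ∩ B)ᶜ = 0 := by
    rintro μ ⟨⟨hprob, hmap⟩, hintf⟩
    haveI := hprob
    refine ⟨hprob, ?_⟩
    have hmapk : ∀ k : ℕ, Measure.map (σ^[k]) μ = μ := by
      intro k
      induction k with
      | zero => simp
      | succ k ih =>
        rw [Function.iterate_succ, ← Measure.map_map (hσ.iterate k).measurable hσ.measurable,
          hmap, ih]
    have hcomp_eq : ∀ (ψ : Ω → ℝ), Measurable ψ → ∀ k : ℕ,
        ∫ ω, ψ (σ^[k] ω) ∂μ = ∫ x, ψ x ∂μ := by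
      intro ψ hm k
      conv_rhs => rw [← hmapk k]
      exact (integral_map (hσ.iterate k).measurable.aemeasurable hm.aestronglyMeasurable).symm
    have hbirk_meas : ∀ (ψ : Ω → ℝ), Measurable ψ → ∀ n : ℕ,
        Measurable (fun ω => birk σ ψ n ω) := by
      intro ψ hm n
      simp only [birk]
      exact Finset.measurable_sum _ fun k _ => hm.comp (hσ.iterate k).measurable
    have hbirk_bd : ∀ (ψ : Ω → ℝ) (D : ℝ), (∀ x, |ψ x| ≤ D) → ∀ (n : ℕ) ω,
        |birk σ ψ n ω| ≤ n * D := by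
      intro ψ D hb n ω
      calc |birk σ ψ n ω| ≤ ∑ k ∈ Finset.range n, |ψ (σ^[k] ω)| :=
            Finset.abs_sum_le_sum_abs _ _
        _ ≤ ∑ _k ∈ Finset.range n, D := Finset.sum_le_sum fun k _ => hb _
        _ = n * D := by simp [mul_comm]
    have hbirk_int_eq : ∀ (ψ : Ω → ℝ) (D : ℝ), Measurable ψ → (∀ x, |ψ x| ≤ D) → ∀ n : ℕ,
        ∫ ω, birk σ ψ n ω ∂μ = n * ∫ x, ψ x ∂μ := by
      intro ψ D hm hb n
      have hterm : ∀ k : ℕ, Integrable (fun ω => ψ (σ^[k] ω)) μ := fun k =>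
        helper_int (hm.comp (hσ.iterate k).measurable) (fun x => hb _)
      calc ∫ ω, birk σ ψ n ω ∂μ = ∫ ω, ∑ k ∈ Finset.range n, ψ (σ^[k] ω) ∂μ := rfl
        _ = ∑ k ∈ Finset.range n, ∫ ω, ψ (σ^[k] ω) ∂μ :=
            integral_finset_sum _ fun k _ => hterm k
        _ = ∑ _k ∈ Finset.range n, ∫ x, ψ x ∂μ :=
            Finset.sum_congr rfl fun k _ => hcomp_eq ψ hm k
        _ = n * ∫ x, ψ x ∂μ := by simp [mul_comm]
    have hfint : Integrable f μ := helper_int hf.measurable hCf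
    have hint_g : ∫ x, g x ∂μ = 0 := by
      show ∫ x, (f x - fbar) ∂μ = 0
      rw [integral_sub hfint (integrable_const fbar), hintf, integral_const]
      simp
    -- truncated function
    set hN : Ω → ℝ := fun ω => min (h ω) 1 with hN_def
    have hN_meas : Measurable hN := hhm.min measurable_const
    have hN_nonneg : ∀ ω, 0 ≤ hN ω := fun ω => le_min (h_nonneg ω) zero_le_one
    have hN_le_one : ∀ ω, hN ω ≤ 1 := fun ω => min_le_right _ _
    have hN_le_h : ∀ ω, hN ω ≤ h ω := fun ω => min_le_left _ _
    have hbN : ∀ x, |hN x| ≤ 1 := fun x => abs_le.2 ⟨by linarith [hN_nonneg x], hN_le_one x⟩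
    have birk_h_eq : ∀ (n : ℕ) ω, birk σ h n ω = birk σ g n ω + up ω - up (σ^[n] ω) := by
      intro n ω
      have e1 : ∀ k, h (σ^[k] ω) =
          g (σ^[k] ω) + (up (σ^[k] ω) - up (σ^[k + 1] ω)) := by
        intro k
        show g (σ^[k] ω) - up (σ (σ^[k] ω)) + up (σ^[k] ω) = _
        rw [← Function.iterate_succ_apply' σ k ω]
        ring
      calc birk σ h n ω
          = ∑ k ∈ Finset.range n, (g (σ^[k] ω) + (up (σ^[k] ω) - up (σ^[k + 1] ω))) :=
            Finset.sum_congr rfl fun k _ => e1 k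
        _ = birk σ g n ω + ∑ k ∈ Finset.range n, (up (σ^[k] ω) - up (σ^[k + 1] ω)) := by
            rw [Finset.sum_add_distrib]; rfl
        _ = birk σ g n ω + (up (σ^[0] ω) - up (σ^[n] ω)) := by
            rw [Finset.sum_range_sub' (fun k => up (σ^[k] ω)) n]
        _ = birk σ g n ω + up ω - up (σ^[n] ω) := by
            rw [Function.iterate_zero_apply]; ring
    have hptkey : ∀ (n : ℕ) ω,
        birk σ hN n ω ≤ birk σ g n ω + min (up ω) ((n : ℝ) * (C + 1)) := by
      intro n ω
      have t1 : birk σ hN n ω ≤ birk σ h n ω :=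
        Finset.sum_le_sum fun k _ => hN_le_h _
      have t2 : birk σ h n ω ≤ birk σ g n ω + up ω := by
        rw [birk_h_eq n ω]; linarith [hup_nonneg (σ^[n] ω)]
      have t3 : birk σ hN n ω ≤ (n : ℝ) := by
        calc birk σ hN n ω ≤ ∑ _k ∈ Finset.range n, (1 : ℝ) :=
              Finset.sum_le_sum fun k _ => hN_le_one _
          _ = (n : ℝ) := by simp
      have t4 : -((n : ℝ) * C) ≤ birk σ g n ω := by
        have := hbirk_bd g C hC n ω
        exact (abs_le.1 this).1
      rcases le_total (up ω) ((n : ℝ) * (C + 1)) with hm | hm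
      · rw [min_eq_left hm]; exact t1.trans t2
      · rw [min_eq_right hm]
        have hnc : (n : ℝ) * (C + 1) = n * C + n := by ring
        linarith
    have hmin_meas : ∀ n : ℕ, Measurable (fun ω => min (up ω) ((n : ℝ) * (C + 1))) :=
      fun n => hupm.min measurable_const
    have hmin_nonneg : ∀ (n : ℕ) ω, 0 ≤ min (up ω) ((n : ℝ) * (C + 1)) := fun n ω =>
      le_min (hup_nonneg ω) (by positivity)
    have hmin_bd : ∀ (n : ℕ) ω, |min (up ω) ((n : ℝ) * (C + 1))| ≤ (n : ℝ) * (C + 1) := by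
      intro n ω
      rw [abs_of_nonneg (hmin_nonneg n ω)]
      exact min_le_right _ _
    have main : ∀ n : ℕ, (n : ℝ) * ∫ x, hN x ∂μ ≤
        ∫ ω, min (up ω) ((n : ℝ) * (C + 1)) ∂μ := by
      intro n
      have int1 : Integrable (fun ω => birk σ hN n ω) μ :=
        helper_int (hbirk_meas hN hN_meas n) (hbirk_bd hN 1 hbN n)
      have int2 : Integrable (fun ω => birk σ g n ω) μ :=
        helper_int (hbirk_meas g hgc.measurable n) (hbirk_bd g C hC n)
      have int3 : Integrable (fun ω => min (up ω) ((n : ℝ) * (C + 1))) μ :=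
        helper_int (hmin_meas n) (hmin_bd n)
      calc (n : ℝ) * ∫ x, hN x ∂μ = ∫ ω, birk σ hN n ω ∂μ :=
            (hbirk_int_eq hN 1 hN_meas hbN n).symm
        _ ≤ ∫ ω, (birk σ g n ω + min (up ω) ((n : ℝ) * (C + 1))) ∂μ :=
            integral_mono int1 (int2.add int3) (fun ω => hptkey n ω)
        _ = ∫ ω, birk σ g n ω ∂μ + ∫ ω, min (up ω) ((n : ℝ) * (C + 1)) ∂μ :=
            integral_add int2 int3
        _ = ∫ ω, min (up ω) ((n : ℝ) * (C + 1)) ∂μ := by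
            rw [hbirk_int_eq g C hgc.measurable hC n, hint_g]; ring
    have main2 : ∀ n : ℕ, 1 ≤ n → ∫ x, hN x ∂μ ≤
        ∫ ω, min (up ω) ((n : ℝ) * (C + 1)) / n ∂μ := by
      intro n hn
      have hn' : (0 : ℝ) < n := by exact_mod_cast hn
      rw [integral_div, le_div_iff₀ hn', mul_comm]
      exact main n
    have hten : Filter.Tendsto (fun n : ℕ => ∫ ω, min (up ω) ((n : ℝ) * (C + 1)) / n ∂μ)
        atTop (𝓝 0) := by
      have := tendsto_integral_of_dominated_convergence (μ := μ)
        (F := fun (n : ℕ) ω => min (up ω) ((n : ℝ) * (C + 1)) / n)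
        (f := fun _ => (0 : ℝ)) (bound := fun _ => C + 1)
        (fun n => ((hmin_meas n).div_const _).aestronglyMeasurable)
        (integrable_const _)
        (fun n => Filter.Eventually.of_forall fun ω => ?_)
        (Filter.Eventually.of_forall fun ω => ?_)
      · simpa using this
      · -- bound
        rw [Real.norm_eq_abs,
          abs_of_nonneg (div_nonneg (hmin_nonneg n ω) n.cast_nonneg)]
        rcases Nat.eq_zero_or_pos n with rfl | hn
        · simp; linarith
        · have hn' : (0 : ℝ) < n := by exact_mod_cast hn
          rw [div_le_iff₀ hn']
          calc min (up ω) ((n : ℝ) * (C + 1)) ≤ (n : ℝ) * (C + 1) := min_le_right _ _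
            _ = (C + 1) * n := mul_comm _ _
      · -- pointwise limit
        refine squeeze_zero (fun n => div_nonneg (hmin_nonneg n ω) n.cast_nonneg)
          (fun n => ?_) (tendsto_const_div_atTop_nhds_zero_nat (up ω))
        rcases Nat.eq_zero_or_pos n with rfl | hn
        · simp
        · have hn' : (0 : ℝ) < n := by exact_mod_cast hn
          rw [div_le_div_iff₀ hn' hn']
          exact mul_le_mul_of_nonneg_right (min_le_left _ _) hn'.le
    have hle0 : ∫ x, hN x ∂μ ≤ 0 :=
      ge_of_tendsto hten (Filter.eventually_atTop.2 ⟨1, fun n hn => main2 n hn⟩)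
    have hNint : Integrable hN μ := helper_int hN_meas hbN
    have hae : hN =ᵐ[μ] 0 := (integral_eq_zero_iff_of_nonneg hN_nonneg hNint).1
      (le_antisymm hle0 (integral_nonneg hN_nonneg))
    have hnull : μ {ω | ¬ h ω = 0} = 0 := by
      have h1 : μ {ω | ¬ hN ω = 0} = 0 := by
        have := hae
        rw [Filter.EventuallyEq, ae_iff] at this
        simpa using this
      refine measure_mono_null (fun ω hω => ?_) h1
      simp only [Set.mem_setOf_eq] at hω ⊢
      exact ne_of_gt (lt_min (lt_of_le_of_ne (h_nonneg ω) (Ne.symm hω)) one_pos)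
    have hms0 : MeasurableSet {ω | h ω = 0} := hhm (measurableSet_singleton 0)
    have hBc : μ Bᶜ = 0 := by
      rw [hB_def, Set.compl_iInter]
      refine measure_iUnion_null fun k => ?_
      have heq : μ ((σ^[k] ⁻¹' {ω | h ω = 0})ᶜ) = μ ({ω | h ω = 0}ᶜ) := by
        rw [← Set.preimage_compl,
          ← Measure.map_apply (hσ.iterate k).measurable hms0.compl, hmapk k]
      rw [heq]
      exact hnull
    rw [Set.compl_inter]
    exact measure_union_null (helper_msupport_null μ) hBc
  -- Part 1
  have part1 : ∀ μ : Measure Ω, IsMinimizing σ f fbar μ → μ (SolSet σ f fbar) = 1 := by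
    intro μ hμ
    obtain ⟨hprob, hc0⟩ := hkey μ hμ
    haveI := hprob
    have hmeasSB : MeasurableSet (msupport μ ∩ B) :=
      (helper_msupport_closed μ).measurableSet.inter hBmeas
    have hfull : μ (msupport μ ∩ B) = 1 := (prob_compl_eq_zero_iff hmeasSB).1 hc0
    refine le_antisymm ((measure_mono (Set.subset_univ _)).trans_eq measure_univ) ?_
    calc (1 : ENNReal) = μ (msupport μ ∩ B) := hfull.symm
      _ ≤ μ (SolSet σ f fbar) := measure_mono (by
          rw [hSol]
          exact fun ω hω => ⟨⟨μ, hμ, hω.1⟩, hω.2⟩)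
  refine ⟨part1, ?_⟩
  -- Part 2
  have hGB : IsGδ ((Subtype.val : MatherSet σ f fbar → Ω) ⁻¹' B) :=
    helper_isGδ_preimage continuous_subtype_val hBGδ
  have hsub : (Subtype.val ⁻¹' B : Set (MatherSet σ f fbar)) ⊆
      Subtype.val ⁻¹' SolSet σ f fbar := by
    intro x hx
    rw [Set.mem_preimage, hSol]
    exact ⟨x.2, hx⟩
  have hdense : Dense (Subtype.val ⁻¹' B : Set (MatherSet σ f fbar)) := by
    rw [dense_iff_inter_open]
    rintro U hU ⟨x, hxU⟩
    obtain ⟨V, hVopen, rfl⟩ := isOpen_induced_iff.1 hU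
    have hxV : (x : Ω) ∈ V := hxU
    obtain ⟨μ, hμmin, hμsupp⟩ := x.2
    obtain ⟨hprob, hc0⟩ := hkey μ hμmin
    have hVpos : 0 < μ V := hμsupp V hVopen hxV
    have hne : (V ∩ (msupport μ ∩ B)).Nonempty := by
      rw [Set.nonempty_iff_ne_empty]
      intro hempty
      have hsubc : V ⊆ (msupport μ ∩ B)ᶜ := fun ω hω hmem =>
        Set.eq_empty_iff_forall_notMem.1 hempty ω ⟨hω, hmem⟩
      exact absurd (measure_mono_null hsubc hc0) hVpos.ne'
    obtain ⟨y, hyV, hySupp, hyB⟩ := hne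
    exact ⟨⟨y, ⟨μ, hμmin, hySupp⟩⟩, hyV, hyB⟩
  exact Filter.mem_of_superset (residual_of_dense_Gδ hGB hdense) hsub
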